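/- arXiv:math-ph/0412019 — 2 statements merged into one kernel-verified Lean document; each statement's English description precedes it below -/
import Mathlib

section
/- Let u : ℝⁿ → ℝⁿ be a C¹ vector field with global flow φ (so φ : ℝ × ℝⁿ → ℝⁿ is C¹ jointly, φ_0 = id, φ_{t+s} = φ_t ∘ φ_s, ∂_t φ_t(x) = u(φ_t(x))). Let U ⊆ ℝⁿ be open, x₀ ∈ U, and let p : U → (0,∞) be differentiable at x₀ and satisfy φ_{p(x)}(x) = x for all x ∈ U. Then Dφ_{p(x₀)}(x₀) = I − u(x₀) (∇p(x₀))ᵀ, and consequently for every ξ₀ ∈ ℝⁿ with ξ₀ · u(x₀) = 0 one has (Dφ_{p(x₀)}(x₀))ᵀ ξ₀ = ξ₀. -/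
/-- The Jacobian matrix `Dφ(x)` of a map `φ : ℝⁿ → ℝⁿ`. -/
noncomputable def jacobian {n : ℕ} (f : (Fin n → ℝ) → (Fin n → ℝ)) (x : Fin n → ℝ) :
    Matrix (Fin n) (Fin n) ℝ :=
  Matrix.of fun i j => fderiv ℝ f x (Pi.single j 1) i

/-- If `p` is a (locally defined, differentiable at `x₀`) period function
of the flow `φ` of `u`, i.e. `φ_{p(x)}(x) = x` near `x₀`, then
`Dφ_{p(x₀)}(x₀) = I − u(x₀)(∇p(x₀))ᵀ`; consequently `(Dφ_{p(x₀)}(x₀))ᵀ ξ₀ = ξ₀` for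
every `ξ₀` orthogonal to `u(x₀)`. -/
theorem stmt_7 {n : ℕ}
    (u : (Fin n → ℝ) → (Fin n → ℝ)) (hu : ContDiff ℝ 1 u)
    (φ : ℝ → (Fin n → ℝ) → (Fin n → ℝ))
    (hφC1 : ContDiff ℝ 1 (fun q : ℝ × (Fin n → ℝ) => φ q.1 q.2))
    (hφ0 : ∀ y, φ 0 y = y)
    (hφadd : ∀ t s y, φ (t + s) y = φ t (φ s y))
    (hφode : ∀ t y, HasDerivAt (fun τ => φ τ y) (u (φ t y)) t)
    (U : Set (Fin n → ℝ)) (hU : IsOpen U) (x₀ : Fin n → ℝ) (hx₀ : x₀ ∈ U)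
    (p : (Fin n → ℝ) → ℝ) (hppos : ∀ x ∈ U, 0 < p x)
    (hpdiff : DifferentiableAt ℝ p x₀)
    (hper : ∀ x ∈ U, φ (p x) x = x) :
    jacobian (φ (p x₀)) x₀ =
      1 - Matrix.vecMulVec (u x₀) (fun j => fderiv ℝ p x₀ (Pi.single j 1)) ∧
    ∀ ξ₀ : Fin n → ℝ, (∑ i, ξ₀ i * u x₀ i) = 0 →
      (jacobian (φ (p x₀)) x₀).transpose.mulVec ξ₀ = ξ₀ := by
  set Φ : ℝ × (Fin n → ℝ) → (Fin n → ℝ) := fun q => φ q.1 q.2 with hΦdef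
  have hΦ : Differentiable ℝ Φ := hφC1.differentiable one_ne_zero
  have hx0fix : φ (p x₀) x₀ = x₀ := hper x₀ hx₀
  set L := fderiv ℝ Φ (p x₀, x₀) with hL
  have hΦd : HasFDerivAt Φ L (p x₀, x₀) := (hΦ (p x₀, x₀)).hasFDerivAt
  -- time derivative
  have h1 : L (1, 0) = u x₀ := by
    have hcurve : HasDerivAt (fun τ => φ τ x₀) (u x₀) (p x₀) := by
      simpa [hx0fix] using hφode (p x₀) x₀
    have hg : HasDerivAt (fun τ : ℝ => (τ, x₀)) ((1 : ℝ), (0 : Fin n → ℝ)) (p x₀) :=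
      HasDerivAt.prodMk (hasDerivAt_id (p x₀)) (hasDerivAt_const _ _)
    have hcomp : HasDerivAt (fun τ => Φ (τ, x₀)) (L ((1 : ℝ), (0 : Fin n → ℝ))) (p x₀) :=
      by have := HasFDerivAt.comp_hasDerivAt _ hΦd hg; exact this
    exact (hcomp.unique hcurve)
  -- spatial derivative
  have hinr : HasFDerivAt (fun y => ((p x₀ : ℝ), y))
      (ContinuousLinearMap.inr ℝ ℝ (Fin n → ℝ)) x₀ :=
    HasFDerivAt.prodMk (hasFDerivAt_const _ _) (hasFDerivAt_id x₀)
  have hspace : HasFDerivAt (φ (p x₀))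
      (L.comp (ContinuousLinearMap.inr ℝ ℝ (Fin n → ℝ))) x₀ := hΦd.comp x₀ hinr
  -- composite derivative
  have hG : HasFDerivAt (fun x => (p x, x))
      ((fderiv ℝ p x₀).prod (ContinuousLinearMap.id ℝ (Fin n → ℝ))) x₀ :=
    HasFDerivAt.prodMk hpdiff.hasFDerivAt (hasFDerivAt_id x₀)
  have hF := HasFDerivAt.comp (f := fun x => (p x, x)) x₀ hΦd hG
  have heq : (fun x => Φ (p x, x)) =ᶠ[nhds x₀] id :=
    Filter.eventuallyEq_of_mem (hU.mem_nhds hx₀) fun x hx => hper x hx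
  have hFid : HasFDerivAt (fun x => Φ (p x, x))
      (ContinuousLinearMap.id ℝ (Fin n → ℝ)) x₀ :=
    (hasFDerivAt_id x₀).congr_of_eventuallyEq heq
  have hLG : L.comp ((fderiv ℝ p x₀).prod (ContinuousLinearMap.id ℝ (Fin n → ℝ)))
      = ContinuousLinearMap.id ℝ (Fin n → ℝ) := hF.unique hFid
  have key : ∀ v, fderiv ℝ (φ (p x₀)) x₀ v = v - (fderiv ℝ p x₀ v) • u x₀ := by
    intro v
    have h2 : fderiv ℝ (φ (p x₀)) x₀ v = L (0, v) := by
      rw [hspace.fderiv]; rfl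
    have h3 : L (fderiv ℝ p x₀ v, v) = v := by
      have := congrArg (fun T : (Fin n → ℝ) →L[ℝ] (Fin n → ℝ) => T v) hLG
      simpa using this
    have h4 : ((fderiv ℝ p x₀ v : ℝ), v)
        = (fderiv ℝ p x₀ v) • ((1 : ℝ), (0 : Fin n → ℝ)) + ((0 : ℝ), v) := by
      simp [Prod.ext_iff]
    rw [h4, map_add, map_smul, h1] at h3
    rw [h2]
    exact eq_sub_of_add_eq' h3
  have hmat : jacobian (φ (p x₀)) x₀ =
      1 - Matrix.vecMulVec (u x₀) (fun j => fderiv ℝ p x₀ (Pi.single j 1)) := by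
    ext i j
    simp [jacobian, key, Matrix.vecMulVec, Matrix.sub_apply, Matrix.one_apply,
      Pi.single_apply, mul_comm, eq_comm]
  refine ⟨hmat, ?_⟩
  intro ξ₀ hξ
  funext i
  have hξ' : ∑ j, u x₀ j * ξ₀ j = 0 := by
    rw [← hξ]; exact Finset.sum_congr rfl fun j _ => mul_comm _ _
  rw [hmat]
  simp only [Matrix.mulVec, dotProduct, Matrix.transpose_apply, Matrix.sub_apply,
    Matrix.one_apply, Matrix.vecMulVec_apply, sub_mul, Finset.sum_sub_distrib,
    ite_mul, one_mul, zero_mul, Finset.sum_ite_eq, Finset.mem_univ, if_true]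
  have : ∑ j, u x₀ j * fderiv ℝ p x₀ (Pi.single i 1) * ξ₀ j
      = (∑ j, u x₀ j * ξ₀ j) * fderiv ℝ p x₀ (Pi.single i 1) := by
    rw [Finset.sum_mul]; exact Finset.sum_congr rfl fun j _ => by ring
  rw [this, hξ']
  simp
end

section
/- Let φ : ℝ × ℝⁿ → ℝⁿ be C¹ jointly in (t,x) with φ_0 = id and φ_{t+s} = φ_t ∘ φ_s, let u(x) := ∂_t φ_t(x)|_{t=0}, and assume φ is volume-preserving: det Dφ_t(x) = 1 for all t, x. Fix x₀ ∈ ℝⁿ and vectors e₁, …, e_{n−1} ∈ ℝⁿ, and define H : ℝ × ℝ^{n−1} → ℝⁿ by H(t, σ) = φ_t(x₀ + Σ_{i=1}^{n−1} σᵢ eᵢ). Then for all (t,σ), the Jacobian determinant of H satisfies det[∂_t H(t,σ), ∂_{σ₁} H(t,σ), …, ∂_{σ_{n−1}} H(t,σ)] = det[u(x_σ), e₁, …, e_{n−1}], where x_σ = x₀ + Σᵢ σᵢ eᵢ; in particular this determinant is independent of t. -/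
/-- Change of variables over a flow-box: for a volume-preserving C¹
flow `φ` with generator `u(x) = ∂_t φ_t(x)|_{t=0}`, the Jacobian determinant of
`H(t,σ) = φ_t(x₀ + Σ σᵢ eᵢ)` equals `det[u(x_σ), e₁, …, e_{n−1}]`; in particular it is
independent of `t`. -/
theorem stmt_19 {n : ℕ}
    (φ : ℝ → (Fin n → ℝ) → (Fin n → ℝ))
    (hφC1 : ContDiff ℝ 1 (fun q : ℝ × (Fin n → ℝ) => φ q.1 q.2))
    (hφ0 : ∀ y, φ 0 y = y)
    (hφadd : ∀ t s y, φ (t + s) y = φ t (φ s y))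
    (hvol : ∀ (t : ℝ) (y : Fin n → ℝ), (jacobian (φ t) y).det = 1)
    (x₀ : Fin n → ℝ) (e : Fin (n - 1) → Fin n → ℝ) :
    ∀ (t : ℝ) (σ : Fin (n - 1) → ℝ),
      Matrix.det (Matrix.of fun i (j : Fin n) =>
        if hj : (j : ℕ) = 0 then
          deriv (fun τ => φ τ (fun i' => x₀ i' + ∑ l, σ l * e l i')) t i
        else
          fderiv ℝ (fun σ' : Fin (n - 1) → ℝ =>
              φ t (fun i' => x₀ i' + ∑ l, σ' l * e l i')) σ
            (Pi.single ⟨(j : ℕ) - 1, by have h1 := j.isLt; omega⟩ 1) i)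
      = Matrix.det (Matrix.of fun i (j : Fin n) =>
        if hj : (j : ℕ) = 0 then
          deriv (fun τ => φ τ (fun i' => x₀ i' + ∑ l, σ l * e l i')) 0 i
        else e ⟨(j : ℕ) - 1, by have h1 := j.isLt; omega⟩ i) := by
  intro t σ
  have hFdiff : Differentiable ℝ (fun q : ℝ × (Fin n → ℝ) => φ q.1 q.2) :=
    hφC1.differentiable one_ne_zero
  have hφt : ∀ (s : ℝ), Differentiable ℝ (φ s) := by
    intro s
    have h : (φ s) = (fun q : ℝ × (Fin n → ℝ) => φ q.1 q.2) ∘ (fun x => (s, x)) := rfl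
    rw [h]
    exact hFdiff.comp ((differentiable_const s).prodMk differentiable_id)
  set xσ : Fin n → ℝ := fun i' => x₀ i' + ∑ l, σ l * e l i' with hxσ
  set c : ℝ → (Fin n → ℝ) := fun τ => φ τ xσ with hc
  have hcdiff : Differentiable ℝ c := by
    have h : c = (fun q : ℝ × (Fin n → ℝ) => φ q.1 q.2) ∘ (fun τ => (τ, xσ)) := rfl
    rw [h]
    exact hFdiff.comp (differentiable_id.prodMk (differentiable_const _))
  set Dt : (Fin n → ℝ) →L[ℝ] (Fin n → ℝ) := fderiv ℝ (φ t) xσ with hDtdef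
  have hc0 : c 0 = xσ := hφ0 xσ
  have h3 : HasFDerivAt (φ t) Dt xσ := ((hφt t) xσ).hasFDerivAt
  -- column 0: deriv c t = Dt (deriv c 0)
  have hkey : deriv c t = Dt (deriv c 0) := by
    have h1 : HasDerivAt c (deriv c 0) 0 := (hcdiff 0).hasDerivAt
    have h2 : HasDerivAt (fun τ => c (τ - t)) (deriv c 0) t := by
      have hsub : HasDerivAt (fun τ : ℝ => τ - t) 1 t := (hasDerivAt_id t).sub_const t
      simpa [Function.comp_def] using HasDerivAt.scomp_of_eq t h1 hsub (sub_self t).symm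
    have h3' : HasFDerivAt (φ t) Dt (c (t - t)) := by
      rw [sub_self, hc0]; exact h3
    have h4 : HasDerivAt (fun τ => φ t (c (τ - t))) (Dt (deriv c 0)) t :=
      h3'.comp_hasDerivAt t h2
    have h5 : (fun τ => φ t (c (τ - t))) = c := by
      funext τ
      show φ t (φ (τ - t) xσ) = φ τ xσ
      rw [← hφadd]
      ring_nf
    rw [h5] at h4
    exact h4.deriv
  -- columns ≥ 1: fderiv = Dt ∘ L
  set L : (Fin (n - 1) → ℝ) →L[ℝ] (Fin n → ℝ) :=
    ∑ l, (ContinuousLinearMap.proj l :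
      (Fin (n - 1) → ℝ) →L[ℝ] ℝ).smulRight (e l) with hL
  have hLapp : ∀ v : Fin (n - 1) → ℝ, L v = ∑ l, v l • e l := by
    intro v
    simp [hL, ContinuousLinearMap.sum_apply]
  have hg : HasFDerivAt
      (fun σ' : Fin (n - 1) → ℝ => (fun i' => x₀ i' + ∑ l, σ' l * e l i' : Fin n → ℝ)) L σ := by
    have h : (fun σ' : Fin (n - 1) → ℝ => (fun i' => x₀ i' + ∑ l, σ' l * e l i' : Fin n → ℝ))
        = fun σ' => x₀ + L σ' := by
      funext σ'
      funext i'
      simp [hLapp, Finset.sum_apply]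
    rw [h]
    exact L.hasFDerivAt.const_add x₀
  have hcomp : HasFDerivAt
      (fun σ' : Fin (n - 1) → ℝ => φ t (fun i' => x₀ i' + ∑ l, σ' l * e l i')) (Dt.comp L) σ :=
    h3.comp σ hg
  have hLsingle : ∀ k : Fin (n - 1), L (Pi.single k 1) = e k := by
    intro k
    rw [hLapp]
    funext i'
    simp [Pi.single_apply, Finset.sum_apply, apply_ite (fun f : Fin n → ℝ => f i')]
  -- basis expansion for Dt
  have hexp : ∀ (v : Fin n → ℝ) (i : Fin n),
      Dt v i = ∑ k, Dt (Pi.single k 1) i * v k := by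
    intro v i
    have hv : v = ∑ k, v k • (Pi.single k 1 : Fin n → ℝ) := by
      funext i'
      simp [Finset.sum_apply, Pi.single_apply]
    conv_lhs => rw [hv]
    rw [map_sum]
    simp [Finset.sum_apply, mul_comm]
  -- M = J * N
  have hMN : (Matrix.of fun i (j : Fin n) =>
        if hj : (j : ℕ) = 0 then deriv c t i
        else
          fderiv ℝ (fun σ' : Fin (n - 1) → ℝ =>
              φ t (fun i' => x₀ i' + ∑ l, σ' l * e l i')) σ
            (Pi.single ⟨(j : ℕ) - 1, by have h1 := j.isLt; omega⟩ 1) i)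
      = (jacobian (φ t) xσ) * (Matrix.of fun i (j : Fin n) =>
        if hj : (j : ℕ) = 0 then deriv c 0 i
        else e ⟨(j : ℕ) - 1, by have h1 := j.isLt; omega⟩ i) := by
    ext i j
    rw [Matrix.mul_apply]
    simp only [Matrix.of_apply, jacobian]
    by_cases hj : (j : ℕ) = 0
    · simp only [hj, dif_pos]
      rw [hkey, hexp]
    · simp only [hj, dif_neg, not_false_iff]
      rw [hcomp.fderiv]
      have : (Dt.comp L) (Pi.single ⟨(j : ℕ) - 1, by have h1 := j.isLt; omega⟩ 1)
          = Dt (e ⟨(j : ℕ) - 1, by have h1 := j.isLt; omega⟩) := by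
        rw [ContinuousLinearMap.comp_apply, hLsingle]
      rw [this, hexp]
  rw [hMN, Matrix.det_mul, hvol, one_mul]
end
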